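/- Limit of fixed points of the Bregman double-backward operator (Theorem 5.1): Let h(x) = Σ_i x_i(log x_i − 1) on ℝ^n_{++}, let A and B be single-valued operators on ℝ^n_{++} with B continuous, and let (γ_k) be a sequence of positive numbers with γ_k → 0. If x ∈ ℝ^n_{++} is a fixed point of J^h_{γ_k A} ∘ J^h_{γ_k B} for every k, then A(x) + B(x) = 0; that is, lim_{γ_k → 0} Fix(J^h_{γ_k A} J^h_{γ_k B}) ⊂ (A+B)^{-1}(0). -/

import Mathlib

/-- **Limit of fixed points of the Bregman double-backward operator (Theorem 5.1).**
With the Boltzmann-Shannon entropy kernel (so the Bregman resolvent of `γT` is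
characterized by `J_{γT}^h w = r ↔ log rᵢ + γ T(r)ᵢ = log wᵢ` on positive vectors),
if `B` is continuous, `γₖ > 0` with `γₖ → 0`, and `x > 0` is a fixed point of
`J_{γₖA}^h ∘ J_{γₖB}^h` for every `k`, then `A x + B x = 0`. -/
theorem bdbm_entropy_fixed_point_limit (n : ℕ)
    (A B : (Fin n → ℝ) → (Fin n → ℝ)) (hB : Continuous B)
    (γ : ℕ → ℝ) (hγpos : ∀ k, 0 < γ k)
    (hγ0 : Filter.Tendsto γ Filter.atTop (nhds 0))
    (JA JB : ℝ → (Fin n → ℝ) → (Fin n → ℝ))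
    (hJA : ∀ t, 0 < t → ∀ w r, (∀ i, 0 < w i) → (∀ i, 0 < r i) →
      (JA t w = r ↔ ∀ i, Real.log (r i) + t * A r i = Real.log (w i)))
    (hJB : ∀ t, 0 < t → ∀ w r, (∀ i, 0 < w i) → (∀ i, 0 < r i) →
      (JB t w = r ↔ ∀ i, Real.log (r i) + t * B r i = Real.log (w i)))
    (hJApos : ∀ t, 0 < t → ∀ w, (∀ i, 0 < w i) → ∀ i, 0 < JA t w i)
    (hJBpos : ∀ t, 0 < t → ∀ w, (∀ i, 0 < w i) → ∀ i, 0 < JB t w i)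
    (x : Fin n → ℝ) (hx : ∀ i, 0 < x i)
    (hfix : ∀ k, x = JA (γ k) (JB (γ k) x)) :
    A x + B x = 0 := by
  set y : ℕ → (Fin n → ℝ) := fun k => JB (γ k) x with hy
  have hypos : ∀ k i, 0 < y k i := fun k => hJBpos (γ k) (hγpos k) x hx
  -- equation from outer resolvent: log (x i) + γ k * A x i = log (y k i)
  have hAeq : ∀ k i, Real.log (x i) + γ k * A x i = Real.log (y k i) := fun k =>
    (hJA (γ k) (hγpos k) (y k) x (hypos k) hx).mp (hfix k).symm
  -- equation from inner resolvent
  have hBeq : ∀ k i, Real.log (y k i) + γ k * B (y k) i = Real.log (x i) := fun k =>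
    (hJB (γ k) (hγpos k) x (y k) hx (hypos k)).mp rfl
  -- B (y k) = - A x
  have hBconst : ∀ k, B (y k) = -A x := by
    intro k
    funext i
    have h1 := hAeq k i
    have h2 := hBeq k i
    have hγ := (hγpos k).ne'
    have : γ k * A x i + γ k * B (y k) i = 0 := by linarith
    have : γ k * (A x i + B (y k) i) = 0 := by ring_nf; linarith [this]
    have := mul_eq_zero.mp this
    rcases this with h | h
    · exact absurd h hγ
    · simp only [Pi.neg_apply]; linarith
  -- y k i = exp (log (x i) + γ k * A x i)
  have hyexp : ∀ k i, y k i = Real.exp (Real.log (x i) + γ k * A x i) := by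
    intro k i
    rw [hAeq k i, Real.exp_log (hypos k i)]
  -- y k → x
  have hylim : Filter.Tendsto y Filter.atTop (nhds x) := by
    rw [tendsto_pi_nhds]
    intro i
    have harg : Filter.Tendsto (fun k => Real.log (x i) + γ k * A x i)
        Filter.atTop (nhds (Real.log (x i))) := by
      have := (tendsto_const_nhds (x := Real.log (x i)) (f := Filter.atTop (α := ℕ))).add
        (hγ0.mul_const (A x i))
      simpa using this
    have : Filter.Tendsto (fun k => Real.exp (Real.log (x i) + γ k * A x i))
        Filter.atTop (nhds (x i)) := by
      have := (Real.continuous_exp.tendsto _).comp harg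
      simpa [Real.exp_log (hx i), Function.comp_def] using this
    exact Filter.Tendsto.congr (fun k => (hyexp k i).symm) this
  -- continuity: B (y k) → B x, but B (y k) = -A x
  have hBlim : Filter.Tendsto (fun k => B (y k)) Filter.atTop (nhds (B x)) :=
    (hB.tendsto x).comp hylim
  have hBlim' : Filter.Tendsto (fun k => B (y k)) Filter.atTop (nhds (-A x)) := by
    simp only [hBconst]; exact tendsto_const_nhds
  have hBx : B x = -A x := tendsto_nhds_unique hBlim hBlim'
  rw [hBx]
  simp
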